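/- Let T be a finite connected multigraph with signed edges and e a positive edge contained in a cycle of all-positive edges. If T' is obtained by flipping e to negative, then the maximum of η over spanning trees is unchanged: max_{t ⊆ T'} η'(t) = max_{t ⊆ T} η(t). -/

import Mathlib

/-- A finite multigraph: vertex type `V`, edge type `E`, each edge has an
unordered pair of endpoints (loops and parallel edges are allowed). -/
structure Multigraph where
  V : Type
  E : Type
  fV : Fintype V
  fE : Fintype E
  dV : DecidableEq V
  dE : DecidableEq E
  ends : E → Sym2 V

attribute [instance] Multigraph.fV Multigraph.fE Multigraph.dV Multigraph.dE

namespace Multigraph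

variable (G : Multigraph)

/-- `u` and `v` are joined by an edge of the edge set `S`. -/
def adjOn (S : Finset G.E) (u v : G.V) : Prop :=
  ∃ e ∈ S, G.ends e = s(u, v)

/-- `u` and `v` are joined by a walk using only edges of `S`. -/
def reach (S : Finset G.E) (u v : G.V) : Prop :=
  Relation.ReflTransGen (G.adjOn S) u v

/-- The spanning subgraph with edge set `S` is connected. -/
def connectedOn (S : Finset G.E) : Prop := ∀ u v : G.V, G.reach S u v

/-- The multigraph is connected. -/
def Connected : Prop := Nonempty G.V ∧ G.connectedOn Finset.univ

/-- The subgraph with edge set `S` contains no cycle: no edge of `S` has its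
endpoints joined within `S` minus that edge. -/
def acyclicOn (S : Finset G.E) : Prop :=
  ∀ e ∈ S, ∀ u v : G.V, G.ends e = s(u, v) → ¬ G.reach (S.erase e) u v

/-- `S` is the edge set of a spanning tree: connected and acyclic spanning
subgraph. -/
def IsSpanningTree (S : Finset G.E) : Prop :=
  G.connectedOn S ∧ G.acyclicOn S

/-- the edge `e` lies in a cycle all of whose edges belong to `S`. -/
def InCycleOn (S : Finset G.E) (e : G.E) : Prop :=
  e ∈ S ∧ ∃ u v : G.V, G.ends e = s(u, v) ∧ G.reach (S.erase e) u v

/-- the positive edges, for a sign labelling (`true` = positive). -/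
def posEdges (sign : G.E → Bool) : Finset G.E :=
  Finset.univ.filter fun e => sign e = true

/-- the negative edges. -/
def negEdges (sign : G.E → Bool) : Finset G.E :=
  Finset.univ.filter fun e => sign e = false

/-- `e` lies in a cycle consisting entirely of positive edges. -/
def InPositiveCycle (sign : G.E → Bool) (e : G.E) : Prop :=
  G.InCycleOn (G.posEdges sign) e

/-- `e` lies in a cycle consisting entirely of negative edges. -/
def InNegativeCycle (sign : G.E → Bool) (e : G.E) : Prop :=
  G.InCycleOn (G.negEdges sign) e

/-- `η(t)` = (# positive edges of `t`) − (# negative edges of `t`). -/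
def eta (sign : G.E → Bool) (t : Finset G.E) : ℤ :=
  ((t.filter fun e => sign e = true).card : ℤ) -
    (t.filter fun e => sign e = false).card

/-- `S` contains a cycle. -/
def Dependent (S : Finset G.E) : Prop := ¬ G.acyclicOn S

/-- `C` is (the edge set of) a cycle: a minimal dependent set. -/
def IsCircuit (C : Finset G.E) : Prop :=
  G.Dependent C ∧ ∀ C' ⊂ C, G.acyclicOn C'

/-- the set of values of `η` on spanning trees. -/
def etaSet (sign : G.E → Bool) : Set ℤ :=
  {x | ∃ t : Finset G.E, G.IsSpanningTree t ∧ G.eta sign t = x}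

lemma reach_symm {S : Finset G.E} {u v : G.V} (h : G.reach S u v) : G.reach S v u := by
  refine (@Relation.ReflTransGen.stdSymm _ _ ⟨?_⟩).symm _ _ h
  rintro x y ⟨f, hf, hends⟩
  exact ⟨f, hf, by rw [hends, Sym2.eq_swap]⟩

lemma reach_mono {S S' : Finset G.E} (hSS : S ⊆ S') {u v : G.V} (h : G.reach S u v) :
    G.reach S' u v := by
  refine Relation.ReflTransGen.mono ?_ _ _ h
  rintro x y ⟨f, hf, hends⟩
  exact ⟨f, hSS hf, hends⟩

/-- Every vertex is reachable from one of the endpoints of `e` after deleting `e`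
from a connected edge set. -/
lemma dichotomy {t : Finset G.E} (hconn : G.connectedOn t) {e : G.E} {u v : G.V}
    (hends : G.ends e = s(u, v)) (x : G.V) :
    G.reach (t.erase e) u x ∨ G.reach (t.erase e) v x := by
  have h := hconn u x
  induction h with
  | refl => exact Or.inl Relation.ReflTransGen.refl
  | tail hpc hadj ih =>
    obtain ⟨g, hg, hgends⟩ := hadj
    by_cases hge : g = e
    · subst hge
      rw [hends] at hgends
      rcases Sym2.eq_iff.mp hgends with ⟨rfl, rfl⟩ | ⟨rfl, rfl⟩
      · exact Or.inr Relation.ReflTransGen.refl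
      · exact Or.inl Relation.ReflTransGen.refl
    · have hadj' : G.adjOn (t.erase e) _ _ := ⟨g, Finset.mem_erase.mpr ⟨hge, hg⟩, hgends⟩
      rcases ih with h1 | h1
      · exact Or.inl (h1.tail hadj')
      · exact Or.inr (h1.tail hadj')

/-- A walk from a vertex satisfying `P` to one not satisfying `P` must cross. -/
lemma crossing {S : Finset G.E} {P : G.V → Prop} {p q : G.V}
    (h : G.reach S p q) (hp : P p) (hq : ¬ P q) :
    ∃ f ∈ S, ∃ a b : G.V, G.ends f = s(a, b) ∧ P a ∧ ¬ P b := by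
  revert hq
  induction h with
  | refl => exact fun hq => absurd hp hq
  | @tail c q hpc hadj ih =>
    intro hq
    by_cases hb : P c
    · obtain ⟨f, hf, hends⟩ := hadj
      exact ⟨f, hf, c, q, hends, hb, hq⟩
    · exact ih hb

lemma reach_insert {S : Finset G.E} {f : G.E} {a b : G.V}
    (hends : G.ends f = s(a, b)) (hab : ¬ G.reach S a b) {x y : G.V}
    (h : G.reach (insert f S) x y) :
    G.reach S x y ∨ (G.reach S x a ∧ G.reach S b y) ∨
      (G.reach S x b ∧ G.reach S a y) := by
  induction h with
  | refl => exact Or.inl Relation.ReflTransGen.refl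
  | @tail c y hxc hadj ih =>
    obtain ⟨g, hg, hgends⟩ := hadj
    rcases Finset.mem_insert.mp hg with rfl | hgS
    · rw [hends] at hgends
      rcases Sym2.eq_iff.mp hgends with ⟨rfl, rfl⟩ | ⟨rfl, rfl⟩
      · -- step goes from a to b (c = a, y = b)
        rcases ih with h1 | ⟨h1, h2⟩ | ⟨h1, h2⟩
        · exact Or.inr (Or.inl ⟨h1, Relation.ReflTransGen.refl⟩)
        · exact absurd (G.reach_symm h2) hab
        · exact Or.inl h1
      · -- step goes from b to a (c = b, y = a)
        rcases ih with h1 | ⟨h1, h2⟩ | ⟨h1, h2⟩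
        · exact Or.inr (Or.inr ⟨h1, Relation.ReflTransGen.refl⟩)
        · exact Or.inl h1
        · exact absurd h2 hab
    · have hadj' : G.adjOn S c y := ⟨g, hgS, hgends⟩
      rcases ih with h1 | ⟨h1, h2⟩ | ⟨h1, h2⟩
      · exact Or.inl (h1.tail hadj')
      · exact Or.inr (Or.inl ⟨h1, h2.tail hadj'⟩)
      · exact Or.inr (Or.inr ⟨h1, h2.tail hadj'⟩)

/-- Exchange lemma: replacing `e` by a suitable crossing edge `f` gives a
spanning tree. -/
lemma exchange {t : Finset G.E} (ht : G.IsSpanningTree t) {e : G.E} (het : e ∈ t)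
    {u v : G.V} (hends : G.ends e = s(u, v))
    {f : G.E} (hft : f ∉ t) {a b : G.V} (hfends : G.ends f = s(a, b))
    (ha : G.reach (t.erase e) u a) (hb : ¬ G.reach (t.erase e) u b) :
    G.IsSpanningTree (insert f (t.erase e)) := by
  have hfe : f ∉ t.erase e := fun h => hft (Finset.mem_of_mem_erase h)
  have hsub : t.erase e ⊆ insert f (t.erase e) := Finset.subset_insert _ _
  have hadjf : G.adjOn (insert f (t.erase e)) a b :=
    ⟨f, Finset.mem_insert_self _ _, hfends⟩
  -- b is reachable from v in t.erase e
  have hbv : G.reach (t.erase e) v b := by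
    rcases G.dichotomy ht.1 hends b with h | h
    · exact absurd h hb
    · exact h
  -- u and v are connected in the new set
  have huv : G.reach (insert f (t.erase e)) u v :=
    ((G.reach_mono hsub ha).tail hadjf).trans (G.reach_mono hsub (G.reach_symm hbv))
  have hux : ∀ x, G.reach (insert f (t.erase e)) u x := by
    intro x
    rcases G.dichotomy ht.1 hends x with h | h
    · exact G.reach_mono hsub h
    · exact huv.trans (G.reach_mono hsub h)
  constructor
  · intro x y
    exact (G.reach_symm (hux x)).trans (hux y)
  · intro g hg x y hgends hreach
    rcases Finset.mem_insert.mp hg with rfl | hgt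
    · rw [Finset.erase_insert hfe] at hreach
      rw [hfends] at hgends
      rcases Sym2.eq_iff.mp hgends with ⟨rfl, rfl⟩ | ⟨rfl, rfl⟩
      · exact hb (ha.trans hreach)
      · exact hb (ha.trans (G.reach_symm hreach))
    · have hgf : g ≠ f := fun h => hfe (h ▸ hgt)
      have hge : g ≠ e := (Finset.mem_erase.mp hgt).1
      rw [Finset.erase_insert_of_ne hgf.symm] at hreach
      have hSsub : (t.erase e).erase g ⊆ t.erase e := Finset.erase_subset _ _
      have hSsub' : (t.erase e).erase g ⊆ t.erase g := by
        intro z hz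
        have := Finset.mem_erase.mp hz
        have := Finset.mem_erase.mp this.2
        exact Finset.mem_erase.mpr ⟨(Finset.mem_erase.mp hz).1, this.2⟩
      have hab' : ¬ G.reach ((t.erase e).erase g) a b := by
        intro h
        exact hb (ha.trans (G.reach_mono hSsub h))
      have hxy : G.reach (t.erase e) x y :=
        Relation.ReflTransGen.single ⟨g, hgt, hgends⟩
      have hacy := ht.2 g (Finset.mem_of_mem_erase hgt) x y hgends
      rcases G.reach_insert hfends hab' hreach with h1 | ⟨h1, h2⟩ | ⟨h1, h2⟩
      · exact hacy (G.reach_mono hSsub' h1)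
      · -- reach x a and reach b y in S; then a ~ x ~ y ~ b gives reach a b
        have : G.reach (t.erase e) a b :=
          ((G.reach_symm (G.reach_mono hSsub h1)).trans hxy).trans
            (G.reach_symm (G.reach_mono hSsub h2))
        exact hb (ha.trans this)
      · have : G.reach (t.erase e) a b :=
          ((G.reach_mono hSsub h2).trans (G.reach_symm hxy)).trans
            (G.reach_mono hSsub h1)
        exact hb (ha.trans this)

lemma eta_of_not_mem {sign : G.E → Bool} {e : G.E} {t : Finset G.E} (het : e ∉ t) :
    G.eta (Function.update sign e false) t = G.eta sign t := by
  unfold eta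
  have h1 : ∀ p : Bool, t.filter (fun x => Function.update sign e false x = p) =
      t.filter (fun x => sign x = p) := by
    intro p
    apply Finset.filter_congr
    intro x hx
    have hxe : x ≠ e := fun h => het (h ▸ hx)
    simp [Function.update_of_ne hxe]
  rw [h1, h1]

lemma eta_exchange {sign : G.E → Bool} {e f : G.E} {t : Finset G.E}
    (he : sign e = true) (hf : sign f = true) (het : e ∈ t) (hft : f ∉ t) :
    G.eta sign (insert f (t.erase e)) = G.eta sign t := by
  unfold eta
  have hfe : f ∉ t.erase e := fun h => hft (Finset.mem_of_mem_erase h)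
  congr 1
  · rw [Finset.filter_insert, if_pos hf, Finset.filter_erase]
    have hfm : f ∉ (t.filter fun x => sign x = true).erase e := fun h =>
      hft (Finset.mem_of_mem_filter _ (Finset.mem_of_mem_erase h))
    rw [Finset.card_insert_of_notMem hfm]
    have hem : e ∈ t.filter fun x => sign x = true :=
      Finset.mem_filter.mpr ⟨het, he⟩
    rw [Finset.card_erase_of_mem hem]
    have : 1 ≤ (t.filter fun x => sign x = true).card :=
      Finset.card_pos.mpr ⟨e, hem⟩
    push_cast [Nat.sub_add_cancel this]
    omega
  · rw [Finset.filter_insert, if_neg (by simp [hf]), Finset.filter_erase]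
    have hem : e ∉ t.filter fun x => sign x = false := by simp [he]
    rw [Finset.erase_eq_of_notMem hem]

lemma eta_update_le {sign : G.E → Bool} {e : G.E} (he : sign e = true)
    (t : Finset G.E) :
    G.eta (Function.update sign e false) t ≤ G.eta sign t := by
  unfold eta
  have h1 : t.filter (fun x => Function.update sign e false x = true) ⊆
      t.filter (fun x => sign x = true) := by
    intro x hx
    obtain ⟨hxt, hxs⟩ := Finset.mem_filter.mp hx
    refine Finset.mem_filter.mpr ⟨hxt, ?_⟩
    by_cases hxe : x = e
    · subst hxe; simp at hxs
    · rwa [Function.update_of_ne hxe] at hxs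
  have h2 : t.filter (fun x => sign x = false) ⊆
      t.filter (fun x => Function.update sign e false x = false) := by
    intro x hx
    obtain ⟨hxt, hxs⟩ := Finset.mem_filter.mp hx
    refine Finset.mem_filter.mpr ⟨hxt, ?_⟩
    have hxe : x ≠ e := fun h => by rw [h, he] at hxs; exact Bool.noConfusion hxs
    rwa [Function.update_of_ne hxe]
  have c1 := Finset.card_le_card h1
  have c2 := Finset.card_le_card h2
  omega

end Multigraph

/-- flipping to negative a positive edge that lies in an
all-positive cycle leaves the maximum of `η` over spanning trees unchanged. -/
theorem stmt6 (G : Multigraph) (hconn : G.Connected) (sign : G.E → Bool)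
    (e : G.E) (he : sign e = true) (hc : G.InPositiveCycle sign e)
    (M M' : ℤ)
    (hM : IsGreatest (G.etaSet sign) M)
    (hM' : IsGreatest (G.etaSet (Function.update sign e false)) M') :
    M' = M := by
  have hle : M' ≤ M := by
    obtain ⟨t2, ht2, hη2⟩ := hM'.1
    have h1 : G.eta sign t2 ≤ M := hM.2 ⟨t2, ht2, rfl⟩
    have h2 := G.eta_update_le he t2
    omega
  have hge : M ≤ M' := by
    obtain ⟨t1, ht1, hη1⟩ := hM.1
    by_cases het : e ∈ t1
    · -- find a crossing edge f on the all-positive cycle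
      obtain ⟨hepos, u, v, hends, hreach⟩ := hc
      have hPv : ¬ G.reach (t1.erase e) u v := ht1.2 e het u v hends
      obtain ⟨f, hfS, a, b, hfends, hPa, hPb⟩ :=
        G.crossing (P := fun z => G.reach (t1.erase e) u z) hreach
          Relation.ReflTransGen.refl hPv
      have hfe : f ≠ e := (Finset.mem_erase.mp hfS).1
      have hfpos : sign f = true := by
        have := Finset.mem_of_mem_erase hfS
        exact (Finset.mem_filter.mp this).2
      have hft : f ∉ t1 := by
        intro hf
        exact hPb (hPa.tail ⟨f, Finset.mem_erase.mpr ⟨hfe, hf⟩, hfends⟩)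
      have htree := G.exchange ht1 het hends hft hfends hPa hPb
      have hnot : e ∉ insert f (t1.erase e) := by
        intro h
        rcases Finset.mem_insert.mp h with h | h
        · exact hfe h.symm
        · exact (Finset.mem_erase.mp h).1 rfl
      refine hM'.2 ⟨insert f (t1.erase e), htree, ?_⟩
      rw [G.eta_of_not_mem hnot, G.eta_exchange he hfpos het hft]
      exact hη1
    · refine hM'.2 ⟨t1, ht1, ?_⟩
      rw [G.eta_of_not_mem het]
      exact hη1
  omega
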